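/- Under the ray-based channel model, the fourth-order moments of the channel entries satisfy, for all 1 ≤ m, n, m', n' ≤ M: E[conj(h_m) · h_n · conj(h_{m'}) · h_{n'}] = (β²/N_P) · [ 2·E(n−m+n'−m') + (N_P − 1)·( E(n−m)·E(n'−m') + E(n'−m)·E(n−m') ) ]. -/

import Mathlib

open MeasureTheory ProbabilityTheory
open scoped ENNReal

lemma my_indep_integral_mul {Ω : Type*} [MeasurableSpace Ω] {μ : Measure Ω}
    [IsProbabilityMeasure μ] {X Y : Ω → ℂ} (hind : IndepFun X Y μ)
    (hX : Measurable X) (hY : Measurable Y) :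
    ∫ ω, X ω * Y ω ∂μ = (∫ ω, X ω ∂μ) * ∫ ω, Y ω ∂μ := by
  rw [indepFun_iff_map_prod_eq_prod_map_map hX.aemeasurable hY.aemeasurable] at hind
  haveI : IsProbabilityMeasure (μ.map X) := Measure.isProbabilityMeasure_map hX.aemeasurable
  haveI : IsProbabilityMeasure (μ.map Y) := Measure.isProbabilityMeasure_map hY.aemeasurable
  calc ∫ ω, X ω * Y ω ∂μ
      = ∫ p : ℂ × ℂ, p.1 * p.2 ∂(μ.map (fun ω => (X ω, Y ω))) := by
        rw [integral_map (f := fun p : ℂ × ℂ => p.1 * p.2) (hX.prodMk hY).aemeasurable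
          (measurable_fst.mul measurable_snd).aestronglyMeasurable]
    _ = ∫ p : ℂ × ℂ, p.1 * p.2 ∂((μ.map X).prod (μ.map Y)) := by rw [hind]
    _ = (∫ x, x ∂(μ.map X)) * ∫ y, y ∂(μ.map Y) :=
        integral_prod_mul (fun x => x) (fun y => y)
    _ = (∫ ω, X ω ∂μ) * ∫ ω, Y ω ∂μ := by
        rw [integral_map (f := fun x => x) hX.aemeasurable aestronglyMeasurable_id,
          integral_map (f := fun y => y) hY.aemeasurable aestronglyMeasurable_id]

lemma my_iIndep_integral_prod {Ω ι : Type*} [MeasurableSpace Ω] {μ : Measure Ω}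
    [IsProbabilityMeasure μ] [DecidableEq ι] {f : ι → Ω → ℂ}
    (hi : iIndepFun f μ) (hm : ∀ i, Measurable (f i)) (s : Finset ι) :
    ∫ ω, ∏ i ∈ s, f i ω ∂μ = ∏ i ∈ s, ∫ ω, f i ω ∂μ := by
  induction s using Finset.induction with
  | empty => simp
  | @insert a s hnot ih =>
    simp only [Finset.prod_insert hnot]
    have hindep : IndepFun (f a) (fun ω => ∏ i ∈ s, f i ω) μ := by
      have := hi.indepFun_finsetProd_of_notMem hm hnot
      have h2 : (∏ j ∈ s, f j) = fun ω => ∏ i ∈ s, f i ω := by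
        ext ω; simp [Finset.prod_apply]
      rw [h2] at this
      exact this.symm
    rw [my_indep_integral_mul hindep (hm a) (Finset.measurable_prod s (fun i _ => hm i)), ih]

lemma lone_case {ι : Type*} (p q r s : ι) (h2 : ¬(p = q ∧ r = s)) (h3 : ¬(p = s ∧ q = r)) :
    (p = r ∧ q = s) ∨
    (p ≠ q ∧ p ≠ r ∧ p ≠ s) ∨ (q ≠ p ∧ q ≠ r ∧ q ≠ s) ∨
    (r ≠ p ∧ r ≠ q ∧ r ≠ s) ∨ (s ≠ p ∧ s ≠ q ∧ s ≠ r) := by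
  by_cases hpq : p = q <;> by_cases hpr : p = r <;> by_cases hps : p = s <;>
    by_cases hqr : q = r <;> by_cases hqs : q = s <;> by_cases hrs : r = s <;>
    simp_all <;> tauto

lemma sum_ne' {ι : Type*} [Fintype ι] [DecidableEq ι] (p : ι) (c : ℂ) :
    (∑ r : ι, if r = p then 0 else c) = ((Fintype.card ι : ℂ) - 1) * c := by
  have h : ∀ r : ι, (if r = p then 0 else c) = c - (if r = p then c else 0) := by
    intro r; split <;> ring
  simp only [h, Finset.sum_sub_distrib, Finset.sum_ite_eq', Finset.mem_univ, if_true,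
    Finset.sum_const, Finset.card_univ, nsmul_eq_mul]
  ring

lemma sum_ne'' {ι : Type*} [Fintype ι] [DecidableEq ι] (p : ι) (c : ℂ) :
    (∑ r : ι, if p = r then 0 else c) = ((Fintype.card ι : ℂ) - 1) * c := by
  have h : ∀ r : ι, (if p = r then 0 else c) = (if r = p then 0 else c) := by
    intro r; simp [eq_comm]
  simp only [h, sum_ne']

lemma quad_sum {ι : Type*} [Fintype ι] [DecidableEq ι] (c1 c2 c3 : ℂ) :
    (∑ p : ι, ∑ q : ι, ∑ r : ι, ∑ s : ι,
      ((if r = s ∧ q = r ∧ p = q then c1 else 0) +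
       (if r = s ∧ p = q ∧ ¬ r = p then c2 else 0) +
       (if p = s ∧ q = r ∧ ¬ p = q then c3 else 0))) =
    (Fintype.card ι : ℂ) * c1 + (Fintype.card ι : ℂ) * ((Fintype.card ι : ℂ) - 1) * c2
      + (Fintype.card ι : ℂ) * ((Fintype.card ι : ℂ) - 1) * c3 := by
  have hpull : ∀ (A : Prop) [Decidable A] (f : ι → ℂ),
      (∑ x : ι, if A then f x else 0) = if A then ∑ x : ι, f x else 0 := by
    intro A _ f; split <;> simp
  simp only [ite_and, Finset.sum_add_distrib, Finset.sum_ite_eq, Finset.mem_univ, if_true,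
    ite_not]
  simp only [hpull, sum_ne', sum_ne'', Finset.sum_ite_eq, Finset.mem_univ, if_true,
    Finset.sum_const, Finset.card_univ, nsmul_eq_mul]
  ring

noncomputable def eph (D lam : ℝ) (z : ℤ) (x : ℝ) : ℂ :=
  Complex.exp (-Complex.I * (2 * (Real.pi : ℂ)) * ((D / lam : ℝ) : ℂ) * (z : ℂ) *
    ((Real.cos x : ℝ) : ℂ))

lemma eph_conj (D lam : ℝ) (z : ℤ) (x : ℝ) :
    (starRingEnd ℂ) (eph D lam z x) = eph D lam (-z) x := by
  rw [eph, eph, ← Complex.exp_conj]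
  congr 1
  simp only [map_mul, map_neg, Complex.conj_I, map_ofNat, Complex.conj_ofReal, map_intCast]
  push_cast
  ring

lemma eph_mul (D lam : ℝ) (z w : ℤ) (x : ℝ) :
    eph D lam z x * eph D lam w x = eph D lam (z + w) x := by
  rw [eph, eph, eph, ← Complex.exp_add]
  congr 1
  push_cast
  ring

lemma eph_norm (D lam : ℝ) (z : ℤ) (x : ℝ) : ‖eph D lam z x‖ = 1 := by
  have harg : -Complex.I * (2 * (Real.pi : ℂ)) * ((D / lam : ℝ) : ℂ) * (z : ℂ) *
      ((Real.cos x : ℝ) : ℂ) =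
      ((-(2 * Real.pi * (D / lam) * (z : ℝ) * Real.cos x) : ℝ) : ℂ) * Complex.I := by
    push_cast
    ring
  rw [eph, harg, Complex.norm_exp_ofReal_mul_I]

lemma eph_meas (D lam : ℝ) (z : ℤ) : Measurable (eph D lam z) := by
  unfold eph
  fun_prop

lemma conj_mul_self (z : ℂ) : (starRingEnd ℂ) z * z = ((‖z‖ ^ 2 : ℝ) : ℂ) := by
  rw [mul_comm, Complex.mul_conj']
  push_cast
  ring

lemma conj_quad (z : ℂ) :
    (starRingEnd ℂ) z * z * (starRingEnd ℂ) z * z = ((‖z‖ ^ 4 : ℝ) : ℂ) := by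
  rw [show (starRingEnd ℂ) z * z * (starRingEnd ℂ) z * z
      = ((starRingEnd ℂ) z * z) * ((starRingEnd ℂ) z * z) from by ring,
    conj_mul_self]
  push_cast
  ring

lemma meas_normsq : Measurable (fun z : ℂ => ((‖z‖ ^ 2 : ℝ) : ℂ)) := by fun_prop

lemma quartic_bound (a b c d : ℝ) (_ : 0 ≤ a) (_ : 0 ≤ b) (_ : 0 ≤ c) (_ : 0 ≤ d) :
    a * b * c * d ≤ (a ^ 4 + b ^ 4 + c ^ 4 + d ^ 4) / 4 := by
  nlinarith [sq_nonneg (a * b - c * d), sq_nonneg (a ^ 2 - b ^ 2), sq_nonneg (c ^ 2 - d ^ 2),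
    sq_nonneg (a - b), sq_nonneg (c - d)]

lemma meas_conj : Measurable (fun z : ℂ => (starRingEnd ℂ) z) :=
  RCLike.continuous_conj.measurable

lemma meas_ite_conj (c : Prop) [Decidable c] :
    Measurable (fun z : ℂ => if c then (starRingEnd ℂ) z else 1) := by
  by_cases h : c
  · simp only [if_pos h]; exact meas_conj
  · simp only [if_neg h]; exact measurable_const

lemma meas_ite_id (c : Prop) [Decidable c] :
    Measurable (fun z : ℂ => if c then z else 1) := by
  by_cases h : c
  · simp only [if_pos h]; exact measurable_id
  · simp only [if_neg h]; exact measurable_const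


lemma quad_sum_rev {ι : Type*} [Fintype ι] [DecidableEq ι] (c1 c2 c3 : ℂ) :
    (∑ s : ι, ∑ r : ι, ∑ q : ι, ∑ p : ι,
      ((if p = q ∧ q = r ∧ r = s then c1 else 0) +
       (if p = q ∧ ¬ r = p ∧ r = s then c2 else 0) +
       (if p = s ∧ q = r ∧ ¬ p = q then c3 else 0))) =
    (Fintype.card ι : ℂ) * c1 + (Fintype.card ι : ℂ) * ((Fintype.card ι : ℂ) - 1) * c2
      + (Fintype.card ι : ℂ) * ((Fintype.card ι : ℂ) - 1) * c3 := by
  have hpull : ∀ (A : Prop) [Decidable A] (f : ι → ℂ),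
      (∑ x : ι, if A then f x else 0) = if A then ∑ x : ι, f x else 0 := by
    intro A _ f; split <;> simp
  simp only [ite_and, Finset.sum_add_distrib, Finset.sum_ite_eq', Finset.mem_univ, if_true,
    ite_not]
  simp only [hpull, sum_ne', sum_ne'', Finset.sum_ite_eq', Finset.mem_univ, if_true,
    ← Finset.mul_sum, Finset.sum_const, Finset.card_univ, nsmul_eq_mul]
  ring

theorem stmt_8 {Ω : Type*} [MeasurableSpace Ω] (μ : Measure Ω) [IsProbabilityMeasure μ]
    {M NP : ℕ} (hM : 1 ≤ M) (hNP : 0 < NP)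
    (D lam β : ℝ) (hD : 0 < D) (hlam : 0 < lam) (hβ : 0 < β)
    (α : Fin NP → Ω → ℂ) (φ : Fin NP → Ω → ℝ)
    (hαmeas : ∀ p, Measurable (α p)) (hφmeas : ∀ p, Measurable (φ p))
    (hαindep : iIndepFun α μ)
    (hαid : ∀ p q, IdentDistrib (α p) (α q) μ μ)
    (hφindep : iIndepFun φ μ)
    (hφid : ∀ p q, IdentDistrib (φ p) (φ q) μ μ)
    (hαφindep : IndepFun (fun ω p => α p ω) (fun ω p => φ p ω) μ)
    (hαL4 : ∀ p, MemLp (α p) 4 μ)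
    (hαmean : ∀ p, ∫ ω, α p ω ∂μ = 0)
    (hαsq : ∀ p, ∫ ω, (α p ω) ^ 2 ∂μ = 0)
    (hαvar : ∀ p, ∫ ω, ‖α p ω‖ ^ 2 ∂μ = β)
    (hα4 : ∀ p, ∫ ω, ‖α p ω‖ ^ 4 ∂μ = 2 * β ^ 2)
    (h : Ω → Fin M → ℂ)
    (hdef : ∀ ω m, h ω m = (1 / (Real.sqrt NP : ℂ)) *
      ∑ p, α p ω * Complex.exp (-Complex.I * (2 * (Real.pi : ℂ)) * ((D / lam : ℝ) : ℂ) *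
        ((m : ℕ) : ℂ) * ((Real.cos (φ p ω) : ℝ) : ℂ)))
    (Efun : ℤ → ℂ)
    (hE : ∀ z : ℤ, Efun z = ∫ ω, Complex.exp (-Complex.I * (2 * (Real.pi : ℂ)) *
      ((D / lam : ℝ) : ℂ) * ((z : ℝ) : ℂ) * ((Real.cos (φ ⟨0, hNP⟩ ω) : ℝ) : ℂ)) ∂μ) :
    ∀ m n m' n' : Fin M,
      ∫ ω, (starRingEnd ℂ) (h ω m) * h ω n * (starRingEnd ℂ) (h ω m') * h ω n' ∂μ =
        ((β ^ 2 / NP : ℝ) : ℂ) *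
          (2 * Efun (((n : ℕ) : ℤ) - ((m : ℕ) : ℤ) + ((n' : ℕ) : ℤ) - ((m' : ℕ) : ℤ)) +
            ((NP : ℂ) - 1) *
              (Efun (((n : ℕ) : ℤ) - ((m : ℕ) : ℤ)) * Efun (((n' : ℕ) : ℤ) - ((m' : ℕ) : ℤ)) +
               Efun (((n' : ℕ) : ℤ) - ((m : ℕ) : ℤ)) * Efun (((n : ℕ) : ℤ) - ((m' : ℕ) : ℤ)))) := by
  intro m n m' n'
  classical
  have hNPC : (NP : ℂ) ≠ 0 := Nat.cast_ne_zero.mpr hNP.ne'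
  set zm : ℤ := ((m : ℕ) : ℤ) with hzm
  set zn : ℤ := ((n : ℕ) : ℤ) with hzn
  set zm' : ℤ := ((m' : ℕ) : ℤ) with hzm'
  set zn' : ℤ := ((n' : ℕ) : ℤ) with hzn'
  -- basic moment facts
  have hconjmean : ∀ j, ∫ ω, (starRingEnd ℂ) (α j ω) ∂μ = 0 := by
    intro j; rw [integral_conj, hαmean j, map_zero]
  have hvarC : ∀ j, ∫ ω, ((‖α j ω‖ ^ 2 : ℝ) : ℂ) ∂μ = ((β : ℝ) : ℂ) := by
    intro j
    have h0 := integral_ofReal (𝕜 := ℂ) (f := fun ω => ‖α j ω‖ ^ 2) (μ := μ)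
    rw [hαvar j] at h0
    exact h0
  have h4C : ∀ j, ∫ ω, ((‖α j ω‖ ^ 4 : ℝ) : ℂ) ∂μ = ((2 * β ^ 2 : ℝ) : ℂ) := by
    intro j
    have h0 := integral_ofReal (𝕜 := ℂ) (f := fun ω => ‖α j ω‖ ^ 4) (μ := μ)
    rw [hα4 j] at h0
    exact h0
  have hEint : ∀ (j : Fin NP) (z : ℤ), ∫ ω, eph D lam z (φ j ω) ∂μ = Efun z := by
    intro j z
    have hid : IdentDistrib (fun ω => eph D lam z (φ j ω))
        (fun ω => eph D lam z (φ ⟨0, hNP⟩ ω)) μ μ :=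
      (hφid j ⟨0, hNP⟩).comp (eph_meas D lam z)
    rw [hid.integral_eq, hE z]
    simp only [eph, Complex.ofReal_intCast]
  -- rewriting h
  have hh : ∀ (ω : Ω) (k : Fin M), h ω k =
      ((Real.sqrt NP : ℂ))⁻¹ * ∑ p, α p ω * eph D lam ((k : ℕ) : ℤ) (φ p ω) := by
    intro ω k
    rw [hdef, one_div]
    congr 1
  have hhconj : ∀ (ω : Ω) (k : Fin M), (starRingEnd ℂ) (h ω k) =
      ((Real.sqrt NP : ℂ))⁻¹ *
        ∑ p, (starRingEnd ℂ) (α p ω) * eph D lam (-((k : ℕ) : ℤ)) (φ p ω) := by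
    intro ω k
    rw [hh, map_mul, map_sum, map_inv₀, Complex.conj_ofReal]
    congr 1
    refine Finset.sum_congr rfl fun p _ => ?_
    rw [map_mul, eph_conj]
  set T : Fin NP → Fin NP → Fin NP → Fin NP → Ω → ℂ := fun p q r s ω =>
    (starRingEnd ℂ) (α p ω) * eph D lam (-zm) (φ p ω) *
    ((α q ω * eph D lam zn (φ q ω)) *
    (((starRingEnd ℂ) (α r ω) * eph D lam (-zm') (φ r ω)) *
    (α s ω * eph D lam zn' (φ s ω)))) with hTdef
  have hsqrt4 : (((Real.sqrt NP : ℂ))⁻¹) ^ 4 = ((NP : ℂ) ^ 2)⁻¹ := by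
    rw [inv_pow]
    congr 1
    have h1 : ((Real.sqrt NP : ℝ) : ℂ) ^ 2 = ((NP : ℝ) : ℂ) := by
      norm_cast
      exact Real.sq_sqrt (Nat.cast_nonneg NP)
    calc ((Real.sqrt NP : ℝ) : ℂ) ^ 4 = (((Real.sqrt NP : ℝ) : ℂ) ^ 2) ^ 2 := by ring
      _ = ((NP : ℝ) : ℂ) ^ 2 := by rw [h1]
      _ = (NP : ℂ) ^ 2 := by norm_cast
  have hexpand : ∀ ω, (starRingEnd ℂ) (h ω m) * h ω n * (starRingEnd ℂ) (h ω m') * h ω n' =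
      ((NP : ℂ) ^ 2)⁻¹ * ∑ s', ∑ r', ∑ q', ∑ p', T p' q' r' s' ω := by
    intro ω
    rw [hhconj ω m, hh ω n, hhconj ω m', hh ω n']
    rw [show ∀ (sc A B C E : ℂ), sc * A * (sc * B) * (sc * C) * (sc * E)
        = sc ^ 4 * (A * (B * (C * E))) from fun _ _ _ _ _ => by ring]
    rw [hsqrt4]
    congr 1
    simp only [hTdef, Finset.sum_mul, Finset.mul_sum]
    rfl
  -- integrability of each term
  have hnorm4int : ∀ j, Integrable (fun ω => ‖α j ω‖ ^ 4) μ := by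
    intro j
    have h0 := (hαL4 j).integrable_norm_rpow (by norm_num) (by norm_num)
    have h1 : (4 : ℝ≥0∞).toReal = (4 : ℝ) := by norm_num
    rw [h1] at h0
    have h2 : ∀ ω : Ω, ‖α j ω‖ ^ (4 : ℝ) = ‖α j ω‖ ^ (4 : ℕ) := by
      intro ω
      rw [show ((4 : ℝ)) = ((4 : ℕ) : ℝ) by norm_num, Real.rpow_natCast]
    simpa only [h2] using h0
  have hTmeas : ∀ p q r s : Fin NP, Measurable (T p q r s) := by
    intro p q r s
    rw [hTdef]
    exact ((meas_conj.comp (hαmeas p)).mul ((eph_meas D lam (-zm)).comp (hφmeas p))).mul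
      ((((hαmeas q).mul ((eph_meas D lam zn).comp (hφmeas q)))).mul
        ((((meas_conj.comp (hαmeas r)).mul ((eph_meas D lam (-zm')).comp (hφmeas r)))).mul
          (((hαmeas s).mul ((eph_meas D lam zn').comp (hφmeas s))))))
  have hTint : ∀ p q r s : Fin NP, Integrable (T p q r s) μ := by
    intro p q r s
    have hgint : Integrable
        (fun ω => (‖α p ω‖ ^ 4 + ‖α q ω‖ ^ 4 + ‖α r ω‖ ^ 4 + ‖α s ω‖ ^ 4) / 4) μ := by
      have h0 := (((hnorm4int p).add (hnorm4int q)).add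
        ((hnorm4int r).add (hnorm4int s))).div_const (c := (4 : ℝ))
      simpa [Pi.add_apply, add_assoc] using h0
    refine Integrable.mono'
      (g := fun ω => (‖α p ω‖ ^ 4 + ‖α q ω‖ ^ 4 + ‖α r ω‖ ^ 4 + ‖α s ω‖ ^ 4) / 4)
      hgint (hTmeas p q r s).aestronglyMeasurable ?_
    refine Filter.Eventually.of_forall fun ω => ?_
    have hb := quartic_bound ‖α p ω‖ ‖α q ω‖ ‖α r ω‖ ‖α s ω‖ (norm_nonneg _) (norm_nonneg _)
      (norm_nonneg _) (norm_nonneg _)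
    calc ‖T p q r s ω‖ = ‖α p ω‖ * ‖α q ω‖ * ‖α r ω‖ * ‖α s ω‖ := by
          rw [hTdef]
          simp only [norm_mul, eph_norm, RCLike.norm_conj, mul_one]
          ring
      _ ≤ _ := hb
  have hswap : ∫ ω, (∑ s', ∑ r', ∑ q', ∑ p', T p' q' r' s' ω) ∂μ
      = ∑ s', ∑ r', ∑ q', ∑ p', ∫ ω, T p' q' r' s' ω ∂μ := by
    rw [integral_finset_sum _ (fun s' _ => integrable_finset_sum _ (fun r' _ =>
      integrable_finset_sum _ (fun q' _ => integrable_finset_sum _ (fun p' _ =>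
        hTint p' q' r' s'))))]
    refine Finset.sum_congr rfl fun s' _ => ?_
    rw [integral_finset_sum _ (fun r' _ => integrable_finset_sum _ (fun q' _ =>
      integrable_finset_sum _ (fun p' _ => hTint p' q' r' s')))]
    refine Finset.sum_congr rfl fun r' _ => ?_
    rw [integral_finset_sum _ (fun q' _ => integrable_finset_sum _ (fun p' _ =>
      hTint p' q' r' s'))]
    refine Finset.sum_congr rfl fun q' _ => ?_
    rw [integral_finset_sum _ (fun p' _ => hTint p' q' r' s')]
  have hsplit : ∀ p q r s : Fin NP, ∫ ω, T p q r s ω ∂μ =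
      (∫ ω, (starRingEnd ℂ) (α p ω) * α q ω * (starRingEnd ℂ) (α r ω) * α s ω ∂μ) *
      ∫ ω, eph D lam (-zm) (φ p ω) * eph D lam zn (φ q ω) * eph D lam (-zm') (φ r ω) *
        eph D lam zn' (φ s ω) ∂μ := by
    intro p q r s
    have hbF : Measurable (fun v : Fin NP → ℂ =>
        (starRingEnd ℂ) (v p) * v q * (starRingEnd ℂ) (v r) * v s) :=
      (((meas_conj.comp (measurable_pi_apply p)).mul (measurable_pi_apply q)).mul
        (meas_conj.comp (measurable_pi_apply r))).mul (measurable_pi_apply s)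
    have hbG : Measurable (fun w : Fin NP → ℝ =>
        eph D lam (-zm) (w p) * eph D lam zn (w q) * eph D lam (-zm') (w r) *
          eph D lam zn' (w s)) :=
      ((((eph_meas D lam (-zm)).comp (measurable_pi_apply p)).mul
        ((eph_meas D lam zn).comp (measurable_pi_apply q))).mul
        ((eph_meas D lam (-zm')).comp (measurable_pi_apply r))).mul
        ((eph_meas D lam zn').comp (measurable_pi_apply s))
    have hind0 := hαφindep.comp hbF hbG
    calc ∫ ω, T p q r s ω ∂μ
        = ∫ ω, ((fun v : Fin NP → ℂ =>
              (starRingEnd ℂ) (v p) * v q * (starRingEnd ℂ) (v r) * v s) ∘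
              (fun ω (p' : Fin NP) => α p' ω)) ω *
            ((fun w : Fin NP → ℝ =>
              eph D lam (-zm) (w p) * eph D lam zn (w q) * eph D lam (-zm') (w r) *
                eph D lam zn' (w s)) ∘ (fun ω (p' : Fin NP) => φ p' ω)) ω ∂μ := by
          refine integral_congr_ae (Filter.Eventually.of_forall fun ω => ?_)
          simp only [hTdef, Function.comp_apply]
          ring
      _ = (∫ ω, ((fun v : Fin NP → ℂ =>
              (starRingEnd ℂ) (v p) * v q * (starRingEnd ℂ) (v r) * v s) ∘
              (fun ω (p' : Fin NP) => α p' ω)) ω ∂μ) *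
            ∫ ω, ((fun w : Fin NP → ℝ =>
              eph D lam (-zm) (w p) * eph D lam zn (w q) * eph D lam (-zm') (w r) *
                eph D lam zn' (w s)) ∘ (fun ω (p' : Fin NP) => φ p' ω)) ω ∂μ :=
          my_indep_integral_mul hind0
            (hbF.comp (measurable_pi_lambda _ (fun p' => hαmeas p')))
            (hbG.comp (measurable_pi_lambda _ (fun p' => hφmeas p')))
      _ = _ := by simp only [Function.comp_apply]
  have hVW : ∀ p q r s : Fin NP, ∫ ω, T p q r s ω ∂μ =
      ((if p = q ∧ q = r ∧ r = s then
          ((2 * β ^ 2 : ℝ) : ℂ) * Efun (zn - zm + zn' - zm') else 0) +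
       (if p = q ∧ ¬ r = p ∧ r = s then
          ((β ^ 2 : ℝ) : ℂ) * (Efun (zn - zm) * Efun (zn' - zm')) else 0) +
       (if p = s ∧ q = r ∧ ¬ p = q then
          ((β ^ 2 : ℝ) : ℂ) * (Efun (zn' - zm) * Efun (zn - zm')) else 0)) := by
    intro p q r s
    rw [hsplit p q r s]
    by_cases h1 : p = q ∧ q = r ∧ r = s
    · obtain ⟨rfl, rfl, rfl⟩ := h1
      have hX : ∫ ω, (starRingEnd ℂ) (α p ω) * α p ω * (starRingEnd ℂ) (α p ω) * α p ω ∂μ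
          = ((2 * β ^ 2 : ℝ) : ℂ) := by
        simp only [conj_quad]
        exact h4C p
      have hY : ∫ ω, eph D lam (-zm) (φ p ω) * eph D lam zn (φ p ω) *
          eph D lam (-zm') (φ p ω) * eph D lam zn' (φ p ω) ∂μ
          = Efun (zn - zm + zn' - zm') := by
        simp only [eph_mul]
        rw [hEint p]
        congr 1
        ring
      rw [hX, hY]
      simp
    · by_cases h2 : p = q ∧ ¬ r = p ∧ r = s
      · obtain ⟨rfl, hrp, rfl⟩ := h2
        have hpr : p ≠ r := fun hh => hrp hh.symm
        have hX : ∫ ω, (starRingEnd ℂ) (α p ω) * α p ω * (starRingEnd ℂ) (α r ω) * α r ω ∂μ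
            = ((β : ℝ) : ℂ) * ((β : ℝ) : ℂ) := by
          have hXeq : ∀ ω : Ω,
              (starRingEnd ℂ) (α p ω) * α p ω * (starRingEnd ℂ) (α r ω) * α r ω
              = ((fun z : ℂ => ((‖z‖ ^ 2 : ℝ) : ℂ)) ∘ (α p)) ω *
                ((fun z : ℂ => ((‖z‖ ^ 2 : ℝ) : ℂ)) ∘ (α r)) ω := by
            intro ω
            simp only [Function.comp_apply, ← conj_mul_self]
            ring
          calc ∫ ω, (starRingEnd ℂ) (α p ω) * α p ω * (starRingEnd ℂ) (α r ω) * α r ω ∂μ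
              = ∫ ω, ((fun z : ℂ => ((‖z‖ ^ 2 : ℝ) : ℂ)) ∘ (α p)) ω *
                  ((fun z : ℂ => ((‖z‖ ^ 2 : ℝ) : ℂ)) ∘ (α r)) ω ∂μ :=
                integral_congr_ae (Filter.Eventually.of_forall hXeq)
            _ = (∫ ω, ((fun z : ℂ => ((‖z‖ ^ 2 : ℝ) : ℂ)) ∘ (α p)) ω ∂μ) *
                  ∫ ω, ((fun z : ℂ => ((‖z‖ ^ 2 : ℝ) : ℂ)) ∘ (α r)) ω ∂μ :=
                my_indep_integral_mul ((hαindep.indepFun hpr).comp meas_normsq meas_normsq)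
                  (meas_normsq.comp (hαmeas p)) (meas_normsq.comp (hαmeas r))
            _ = ((β : ℝ) : ℂ) * ((β : ℝ) : ℂ) := by
                simp only [Function.comp_apply]
                rw [hvarC p, hvarC r]
        have hY : ∫ ω, eph D lam (-zm) (φ p ω) * eph D lam zn (φ p ω) *
            eph D lam (-zm') (φ r ω) * eph D lam zn' (φ r ω) ∂μ
            = Efun (zn - zm) * Efun (zn' - zm') := by
          have hYeq : ∀ ω : Ω, eph D lam (-zm) (φ p ω) * eph D lam zn (φ p ω) *
              eph D lam (-zm') (φ r ω) * eph D lam zn' (φ r ω)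
              = ((fun x : ℝ => eph D lam (-zm) x * eph D lam zn x) ∘ (φ p)) ω *
                ((fun x : ℝ => eph D lam (-zm') x * eph D lam zn' x) ∘ (φ r)) ω := by
            intro ω
            simp only [Function.comp_apply]
            ring
          calc ∫ ω, eph D lam (-zm) (φ p ω) * eph D lam zn (φ p ω) *
              eph D lam (-zm') (φ r ω) * eph D lam zn' (φ r ω) ∂μ
              = ∫ ω, ((fun x : ℝ => eph D lam (-zm) x * eph D lam zn x) ∘ (φ p)) ω *
                  ((fun x : ℝ => eph D lam (-zm') x * eph D lam zn' x) ∘ (φ r)) ω ∂μ :=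
                integral_congr_ae (Filter.Eventually.of_forall hYeq)
            _ = (∫ ω, ((fun x : ℝ => eph D lam (-zm) x * eph D lam zn x) ∘ (φ p)) ω ∂μ) *
                  ∫ ω, ((fun x : ℝ => eph D lam (-zm') x * eph D lam zn' x) ∘ (φ r)) ω ∂μ :=
                my_indep_integral_mul ((hφindep.indepFun hpr).comp
                    ((eph_meas D lam (-zm)).mul (eph_meas D lam zn))
                    ((eph_meas D lam (-zm')).mul (eph_meas D lam zn')))
                  (((eph_meas D lam (-zm)).mul (eph_meas D lam zn)).comp (hφmeas p))
                  (((eph_meas D lam (-zm')).mul (eph_meas D lam zn')).comp (hφmeas r))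
            _ = Efun (zn - zm) * Efun (zn' - zm') := by
                simp only [Function.comp_apply, eph_mul]
                rw [show -zm + zn = zn - zm from by ring,
                  show -zm' + zn' = zn' - zm' from by ring, hEint p, hEint r]
        rw [hX, hY]
        rw [if_neg (fun hcon => hpr hcon.2.1), if_pos ⟨rfl, hrp, rfl⟩,
          if_neg (fun hcon => hcon.2.2 rfl)]
        push_cast
        ring
      · by_cases h3 : p = s ∧ q = r ∧ ¬ p = q
        · obtain ⟨rfl, rfl, hpq⟩ := h3
          have hX : ∫ ω, (starRingEnd ℂ) (α p ω) * α q ω * (starRingEnd ℂ) (α q ω) * α p ω ∂μ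
              = ((β : ℝ) : ℂ) * ((β : ℝ) : ℂ) := by
            have hXeq : ∀ ω : Ω,
                (starRingEnd ℂ) (α p ω) * α q ω * (starRingEnd ℂ) (α q ω) * α p ω
                = ((fun z : ℂ => ((‖z‖ ^ 2 : ℝ) : ℂ)) ∘ (α p)) ω *
                  ((fun z : ℂ => ((‖z‖ ^ 2 : ℝ) : ℂ)) ∘ (α q)) ω := by
              intro ω
              simp only [Function.comp_apply, ← conj_mul_self]
              ring
            calc ∫ ω, (starRingEnd ℂ) (α p ω) * α q ω * (starRingEnd ℂ) (α q ω) * α p ω ∂μ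
                = ∫ ω, ((fun z : ℂ => ((‖z‖ ^ 2 : ℝ) : ℂ)) ∘ (α p)) ω *
                    ((fun z : ℂ => ((‖z‖ ^ 2 : ℝ) : ℂ)) ∘ (α q)) ω ∂μ :=
                  integral_congr_ae (Filter.Eventually.of_forall hXeq)
              _ = (∫ ω, ((fun z : ℂ => ((‖z‖ ^ 2 : ℝ) : ℂ)) ∘ (α p)) ω ∂μ) *
                    ∫ ω, ((fun z : ℂ => ((‖z‖ ^ 2 : ℝ) : ℂ)) ∘ (α q)) ω ∂μ :=
                  my_indep_integral_mul ((hαindep.indepFun hpq).comp meas_normsq meas_normsq)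
                    (meas_normsq.comp (hαmeas p)) (meas_normsq.comp (hαmeas q))
              _ = ((β : ℝ) : ℂ) * ((β : ℝ) : ℂ) := by
                  simp only [Function.comp_apply]
                  rw [hvarC p, hvarC q]
          have hY : ∫ ω, eph D lam (-zm) (φ p ω) * eph D lam zn (φ q ω) *
              eph D lam (-zm') (φ q ω) * eph D lam zn' (φ p ω) ∂μ
              = Efun (zn' - zm) * Efun (zn - zm') := by
            have hYeq : ∀ ω : Ω, eph D lam (-zm) (φ p ω) * eph D lam zn (φ q ω) *
                eph D lam (-zm') (φ q ω) * eph D lam zn' (φ p ω)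
                = ((fun x : ℝ => eph D lam (-zm) x * eph D lam zn' x) ∘ (φ p)) ω *
                  ((fun x : ℝ => eph D lam zn x * eph D lam (-zm') x) ∘ (φ q)) ω := by
              intro ω
              simp only [Function.comp_apply]
              ring
            calc ∫ ω, eph D lam (-zm) (φ p ω) * eph D lam zn (φ q ω) *
                eph D lam (-zm') (φ q ω) * eph D lam zn' (φ p ω) ∂μ
                = ∫ ω, ((fun x : ℝ => eph D lam (-zm) x * eph D lam zn' x) ∘ (φ p)) ω *
                    ((fun x : ℝ => eph D lam zn x * eph D lam (-zm') x) ∘ (φ q)) ω ∂μ :=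
                  integral_congr_ae (Filter.Eventually.of_forall hYeq)
              _ = (∫ ω, ((fun x : ℝ => eph D lam (-zm) x * eph D lam zn' x) ∘ (φ p)) ω ∂μ) *
                    ∫ ω, ((fun x : ℝ => eph D lam zn x * eph D lam (-zm') x) ∘ (φ q)) ω ∂μ :=
                  my_indep_integral_mul ((hφindep.indepFun hpq).comp
                      ((eph_meas D lam (-zm)).mul (eph_meas D lam zn'))
                      ((eph_meas D lam zn).mul (eph_meas D lam (-zm'))))
                    (((eph_meas D lam (-zm)).mul (eph_meas D lam zn')).comp (hφmeas p))
                    (((eph_meas D lam zn).mul (eph_meas D lam (-zm'))).comp (hφmeas q))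
              _ = Efun (zn' - zm) * Efun (zn - zm') := by
                  simp only [Function.comp_apply, eph_mul]
                  rw [show -zm + zn' = zn' - zm from by ring,
                    show zn + -zm' = zn - zm' from by ring, hEint p, hEint q]
          rw [hX, hY]
          rw [if_neg (fun hcon => hpq hcon.1), if_neg (fun hcon => hpq hcon.1),
            if_pos ⟨rfl, rfl, hpq⟩]
          push_cast
          ring
        · -- all remaining patterns integrate to zero
          have h2' : ¬(p = q ∧ r = s) := by
            rintro ⟨hpq, hrs⟩
            by_cases hrp : r = p
            · exact h1 ⟨hpq, (hrp.trans hpq).symm, hrs⟩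
            · exact h2 ⟨hpq, hrp, hrs⟩
          have h3' : ¬(p = s ∧ q = r) := by
            rintro ⟨hps, hqr⟩
            by_cases hpq : p = q
            · exact h1 ⟨hpq, hqr, hqr.symm.trans (hpq.symm.trans hps)⟩
            · exact h3 ⟨hps, hqr, hpq⟩
          have key := lone_case p q r s h2' h3'
          suffices hX0 : ∫ ω, (starRingEnd ℂ) (α p ω) * α q ω * (starRingEnd ℂ) (α r ω) *
              α s ω ∂μ = 0 by
            rw [hX0, zero_mul, if_neg h1, if_neg h2, if_neg h3]
            ring
          set F : Fin NP → ℂ → ℂ := fun j z =>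
            (if j = p then (starRingEnd ℂ) z else 1) * ((if j = q then z else 1) *
              ((if j = r then (starRingEnd ℂ) z else 1) * (if j = s then z else 1))) with hFdef
          have hFmeas : ∀ j, Measurable (F j) := fun j =>
            (meas_ite_conj _).mul ((meas_ite_id _).mul ((meas_ite_conj _).mul (meas_ite_id _)))
          have hgind := hαindep.comp F hFmeas
          have hgmeas : ∀ j, Measurable (F j ∘ α j) := fun j => (hFmeas j).comp (hαmeas j)
          have hXrep : ∀ ω, (starRingEnd ℂ) (α p ω) * α q ω * (starRingEnd ℂ) (α r ω) * α s ω
              = ∏ j, (F j ∘ α j) ω := by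
            intro ω
            simp only [hFdef, Function.comp_apply, Finset.prod_mul_distrib]
            simp only [Finset.prod_ite_eq', Finset.mem_univ, if_true]
            ring
          have hXp : ∫ ω, (starRingEnd ℂ) (α p ω) * α q ω * (starRingEnd ℂ) (α r ω) *
              α s ω ∂μ = ∏ j, ∫ ω, (F j ∘ α j) ω ∂μ := by
            rw [← my_iIndep_integral_prod hgind hgmeas]
            exact integral_congr_ae (Filter.Eventually.of_forall hXrep)
          rw [hXp]
          rcases key with ⟨hpr, hqs⟩ | ⟨ha, hb, hc⟩ | ⟨ha, hb, hc⟩ | ⟨ha, hb, hc⟩ | ⟨ha, hb, hc⟩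
          · -- p = r and q = s : conjugate square gives zero
            have hpq : p ≠ q := fun hpq => h2' ⟨hpq, hpr.symm.trans (hpq.trans hqs)⟩
            have hps : p ≠ s := fun hps => hpq (hps.trans hqs.symm)
            refine Finset.prod_eq_zero (Finset.mem_univ p) ?_
            have hform : ∀ ω : Ω, (F p ∘ α p) ω = (starRingEnd ℂ) (α p ω * α p ω) := by
              intro ω
              simp only [hFdef, Function.comp_apply, if_pos hpr, if_neg hpq,
                if_neg hps, eq_self_iff_true, if_true, one_mul, mul_one, map_mul]
            have hsq0 : ∫ ω, α p ω * α p ω ∂μ = 0 := by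
              have h0 := hαsq p
              simpa [pow_two] using h0
            simp only [hform]
            rw [integral_conj, hsq0, map_zero]
          · refine Finset.prod_eq_zero (Finset.mem_univ p) ?_
            have hform : ∀ ω : Ω, (F p ∘ α p) ω = (starRingEnd ℂ) (α p ω) := by
              intro ω
              simp only [hFdef, Function.comp_apply, if_pos rfl, if_neg ha, if_neg hb,
                if_neg hc, eq_self_iff_true, if_true, mul_one, one_mul]
            simp only [hform]
            exact hconjmean p
          · refine Finset.prod_eq_zero (Finset.mem_univ q) ?_
            have hform : ∀ ω : Ω, (F q ∘ α q) ω = α q ω := by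
              intro ω
              simp only [hFdef, Function.comp_apply, if_pos rfl, if_neg ha, if_neg hb,
                if_neg hc, eq_self_iff_true, if_true, mul_one, one_mul]
            simp only [hform]
            exact hαmean q
          · refine Finset.prod_eq_zero (Finset.mem_univ r) ?_
            have hform : ∀ ω : Ω, (F r ∘ α r) ω = (starRingEnd ℂ) (α r ω) := by
              intro ω
              simp only [hFdef, Function.comp_apply, if_pos rfl, if_neg ha, if_neg hb,
                if_neg hc, eq_self_iff_true, if_true, mul_one, one_mul]
            simp only [hform]
            exact hconjmean r
          · refine Finset.prod_eq_zero (Finset.mem_univ s) ?_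
            have hform : ∀ ω : Ω, (F s ∘ α s) ω = α s ω := by
              intro ω
              simp only [hFdef, Function.comp_apply, if_pos rfl, if_neg ha, if_neg hb,
                if_neg hc, eq_self_iff_true, if_true, mul_one, one_mul]
            simp only [hform]
            exact hαmean s
  calc ∫ ω, (starRingEnd ℂ) (h ω m) * h ω n * (starRingEnd ℂ) (h ω m') * h ω n' ∂μ
      = ∫ ω, ((NP : ℂ) ^ 2)⁻¹ * ∑ s', ∑ r', ∑ q', ∑ p', T p' q' r' s' ω ∂μ :=
        integral_congr_ae (Filter.Eventually.of_forall hexpand)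
    _ = ((NP : ℂ) ^ 2)⁻¹ * ∫ ω, ∑ s', ∑ r', ∑ q', ∑ p', T p' q' r' s' ω ∂μ :=
        integral_const_mul _ _
    _ = ((NP : ℂ) ^ 2)⁻¹ * ∑ s', ∑ r', ∑ q', ∑ p', ∫ ω, T p' q' r' s' ω ∂μ := by rw [hswap]
    _ = ((NP : ℂ) ^ 2)⁻¹ * ∑ s' : Fin NP, ∑ r' : Fin NP, ∑ q' : Fin NP, ∑ p' : Fin NP,
          ((if p' = q' ∧ q' = r' ∧ r' = s' then
              ((2 * β ^ 2 : ℝ) : ℂ) * Efun (zn - zm + zn' - zm') else 0) +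
           (if p' = q' ∧ ¬ r' = p' ∧ r' = s' then
              ((β ^ 2 : ℝ) : ℂ) * (Efun (zn - zm) * Efun (zn' - zm')) else 0) +
           (if p' = s' ∧ q' = r' ∧ ¬ p' = q' then
              ((β ^ 2 : ℝ) : ℂ) * (Efun (zn' - zm) * Efun (zn - zm')) else 0)) := by
        simp only [hVW]
    _ = ((NP : ℂ) ^ 2)⁻¹ *
          ((NP : ℂ) * (((2 * β ^ 2 : ℝ) : ℂ) * Efun (zn - zm + zn' - zm'))
            + (NP : ℂ) * ((NP : ℂ) - 1) *
                (((β ^ 2 : ℝ) : ℂ) * (Efun (zn - zm) * Efun (zn' - zm')))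
            + (NP : ℂ) * ((NP : ℂ) - 1) *
                (((β ^ 2 : ℝ) : ℂ) * (Efun (zn' - zm) * Efun (zn - zm')))) := by
        rw [quad_sum_rev]
        simp only [Fintype.card_fin]
    _ = _ := by
        push_cast
        field_simp
        ring
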